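/- Let v ∈ SO⁺(2,1), x ∈ ℝ³, μ, s ∈ ℝ, set h = [[v, x],[0,1]] ∈ ISO⁺(2,1), p = μ·v·e₀ and k = x ×_η p + s·v·e₀. Then h·(μĴ₀ + sP̂₀)·h⁻¹ = [[M(p), k],[0,0]]; moreover η(p,p) = μ² and η(p,k) = μs. (Equations (3.17)–(3.19): the coadjoint-orbit element T = h(μJ₀ + sP₀)h⁻¹ = k_aP^a + p^aJ_a of a particle of mass μ and spin s has momentum p⃗ = μ Ad(v)J₀ and angular momentum k⃗ = x⃗ ∧ p⃗ + s p̂, satisfying the mass constraint p_ap^a = μ² and the spin constraint p_ak^a = μs.) -/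

import Mathlib

open Matrix

noncomputable section

attribute [local instance] Matrix.normedAddCommGroup Matrix.normedSpace

/-- The Minkowski metric matrix diag(1,-1,-1). -/
def η3 : Matrix (Fin 3) (Fin 3) ℝ := Matrix.diagonal ![1, -1, -1]

/-- The Minkowski bilinear form on ℝ³. -/
def mink (x y : Fin 3 → ℝ) : ℝ := x 0 * y 0 - x 1 * y 1 - x 2 * y 2

/-- The Minkowski cross product. -/
def crossM (p q : Fin 3 → ℝ) : Fin 3 → ℝ :=
  ![p 1 * q 2 - p 2 * q 1, p 0 * q 2 - p 2 * q 0, p 1 * q 0 - p 0 * q 1]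

/-- The map M : ℝ³ → so(2,1), M(p)q = p ×_η q. -/
def Mmap (p : Fin 3 → ℝ) : Matrix (Fin 3) (Fin 3) ℝ :=
  !![0, -(p 2), p 1; -(p 2), 0, p 0; p 1, -(p 0), 0]

/-- The inverse m : so(2,1) → ℝ³ of M (extracted entrywise). -/
def mser (X : Matrix (Fin 3) (Fin 3) ℝ) : Fin 3 → ℝ := ![X 1 2, X 0 2, -(X 0 1)]

/-- Membership in SO⁺(2,1). -/
def IsSOplus (v : Matrix (Fin 3) (Fin 3) ℝ) : Prop :=
  vᵀ * η3 * v = η3 ∧ v.det = 1 ∧ 0 < v 0 0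

/-- so(2,1) as a set of 3×3 matrices. -/
def IsSO21 (X : Matrix (Fin 3) (Fin 3) ℝ) : Prop := Xᵀ * η3 + η3 * X = 0

/-- The 4×4 Poincaré matrix [[v,x],[0,1]]. -/
def pmat (v : Matrix (Fin 3) (Fin 3) ℝ) (x : Fin 3 → ℝ) : Matrix (Fin 4) (Fin 4) ℝ :=
  Matrix.of fun i j =>
    if hi : (i : ℕ) < 3 then
      if hj : (j : ℕ) < 3 then v ⟨i, hi⟩ ⟨j, hj⟩ else x ⟨i, hi⟩
    else if (j : ℕ) < 3 then 0 else 1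

/-- The 4×4 iso(2,1) matrix [[X,b],[0,0]]. -/
def amat (X : Matrix (Fin 3) (Fin 3) ℝ) (b : Fin 3 → ℝ) : Matrix (Fin 4) (Fin 4) ℝ :=
  Matrix.of fun i j =>
    if hi : (i : ℕ) < 3 then
      if hj : (j : ℕ) < 3 then X ⟨i, hi⟩ ⟨j, hj⟩ else b ⟨i, hi⟩
    else 0

/-- Membership in the Poincaré group ISO⁺(2,1) ⊂ GL₄(ℝ). -/
def IsISO (g : Matrix (Fin 4) (Fin 4) ℝ) : Prop :=
  ∃ v x, IsSOplus v ∧ g = pmat v x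

/-- Membership in the Lie algebra iso(2,1). -/
def IsISOAlg (ξ : Matrix (Fin 4) (Fin 4) ℝ) : Prop :=
  ∃ X b, IsSO21 X ∧ ξ = amat X b

/-- Standard basis vectors of ℝ³. -/
def e3 (a : Fin 3) : Fin 3 → ℝ := Pi.single a 1

/-- The rotation/boost generators Ĵ_a of iso(2,1). -/
def Jhat (a : Fin 3) : Matrix (Fin 4) (Fin 4) ℝ := amat (Mmap (e3 a)) 0

/-- The translation generators P̂_a of iso(2,1). -/
def Phat (a : Fin 3) : Matrix (Fin 4) (Fin 4) ℝ := amat 0 (e3 a)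

/-- The invariant pairing ⟨[[X,b],0],[[Y,c],0]⟩ = η(m X, c) + η(m Y, b) on iso(2,1). -/
def pairIso (ξ ζ : Matrix (Fin 4) (Fin 4) ℝ) : ℝ :=
  mink ![ξ 1 2, ξ 0 2, -(ξ 0 1)] ![ζ 0 3, ζ 1 3, ζ 2 3]
  + mink ![ζ 1 2, ζ 0 2, -(ζ 0 1)] ![ξ 0 3, ξ 1 3, ξ 2 3]

/-- Ordered product U_k(ε) = u_{k-1}(ε)⋯u_0(ε) (with U_0 = 1). -/
def ordProd {n : ℕ} (u : ℕ → ℝ → Matrix (Fin n) (Fin n) ℝ) : ℕ → ℝ → Matrix (Fin n) (Fin n) ℝ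
  | 0 => fun _ => 1
  | k + 1 => fun ε => u k ε * ordProd u k ε


lemma fin4_v3 : ((3 : Fin 4) : ℕ) = 3 := rfl
lemma fin4_v2 : ((2 : Fin 4) : ℕ) = 2 := rfl
lemma fin4_v1 : ((1 : Fin 4) : ℕ) = 1 := rfl
lemma fin4_v0 : ((0 : Fin 4) : ℕ) = 0 := rfl

lemma eta_sq : η3 * η3 = 1 := by
  ext i j
  fin_cases i <;> fin_cases j <;>
    simp [η3, Matrix.mul_apply, Fin.sum_univ_three, Matrix.diagonal]

lemma Mmap_smul (r : ℝ) (q : Fin 3 → ℝ) : Mmap (r • q) = r • Mmap q := by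
  ext i j
  fin_cases i <;> fin_cases j <;> simp [Mmap] <;> ring

lemma Mmap_mulVec (q r : Fin 3 → ℝ) : Mmap q *ᵥ r = crossM q r := by
  ext i
  fin_cases i <;>
    simp [Mmap, crossM, Matrix.mulVec, dotProduct, Fin.sum_univ_three] <;> ring

lemma crossM_anti (q r : Fin 3 → ℝ) : crossM q r = -crossM r q := by
  ext i
  fin_cases i <;> simp [crossM] <;> ring

lemma pmat_mul (a b : Matrix (Fin 3) (Fin 3) ℝ) (c d : Fin 3 → ℝ) :
    pmat a c * pmat b d = pmat (a * b) (a *ᵥ d + c) := by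
  ext i j
  fin_cases i <;> fin_cases j <;>
    simp [pmat, Matrix.mul_apply, Matrix.mulVec, dotProduct,
      Fin.sum_univ_four, Fin.sum_univ_three, fin4_v0, fin4_v1, fin4_v2, fin4_v3]

lemma pmat_one : pmat 1 0 = 1 := by
  ext i j
  fin_cases i <;> fin_cases j <;>
    simp [pmat, Matrix.one_apply, fin4_v0, fin4_v1, fin4_v2, fin4_v3, Fin.ext_iff]

lemma pmat_mul_amat (a : Matrix (Fin 3) (Fin 3) ℝ) (c : Fin 3 → ℝ)
    (X : Matrix (Fin 3) (Fin 3) ℝ) (b : Fin 3 → ℝ) :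
    pmat a c * amat X b = amat (a * X) (a *ᵥ b) := by
  ext i j
  fin_cases i <;> fin_cases j <;>
    simp [pmat, amat, Matrix.mul_apply, Matrix.mulVec, dotProduct,
      Fin.sum_univ_four, Fin.sum_univ_three, fin4_v0, fin4_v1, fin4_v2, fin4_v3] <;> ring

lemma amat_mul_pmat (X : Matrix (Fin 3) (Fin 3) ℝ) (b : Fin 3 → ℝ)
    (a' : Matrix (Fin 3) (Fin 3) ℝ) (c' : Fin 3 → ℝ) :
    amat X b * pmat a' c' = amat (X * a') (X *ᵥ c' + b) := by
  ext i j
  fin_cases i <;> fin_cases j <;>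
    simp [pmat, amat, Matrix.mul_apply, Matrix.mulVec, dotProduct,
      Fin.sum_univ_four, Fin.sum_univ_three, fin4_v0, fin4_v1, fin4_v2, fin4_v3] <;> ring

lemma smul_Jhat_add_smul_Phat (μ s : ℝ) :
    μ • Jhat 0 + s • Phat 0 = amat (μ • Mmap (e3 0)) (s • e3 0) := by
  ext i j
  fin_cases i <;> fin_cases j <;>
    simp [Jhat, Phat, amat, Mmap, e3, Pi.single_apply, Matrix.add_apply,
      Matrix.smul_apply, Pi.smul_apply, fin4_v0, fin4_v1, fin4_v2, fin4_v3, Fin.ext_iff,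
      Matrix.vecHead, Matrix.vecTail, Function.comp, -Fin.val_eq_zero_iff] <;> ring

lemma key_conj (v : Matrix (Fin 3) (Fin 3) ℝ) (hη : vᵀ * η3 * v = η3) (hdet : v.det = 1) :
    v * Mmap (e3 0) * (η3 * vᵀ * η3) = Mmap (v *ᵥ e3 0) := by
  have hwv : (η3 * vᵀ * η3) * v = 1 := by
    calc (η3 * vᵀ * η3) * v = η3 * (vᵀ * η3 * v) := by simp only [Matrix.mul_assoc]
    _ = η3 * η3 := by rw [hη]
    _ = 1 := eta_sq
  have hvw : v * (η3 * vᵀ * η3) = 1 := mul_eq_one_comm.mp hwv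
  have hadj : adjugate v = η3 * vᵀ * η3 := by
    calc adjugate v = 1 * adjugate v := (one_mul _).symm
    _ = ((η3 * vᵀ * η3) * v) * adjugate v := by rw [hwv]
    _ = (η3 * vᵀ * η3) * (v * adjugate v) := by simp only [Matrix.mul_assoc]
    _ = (η3 * vᵀ * η3) * (v.det • 1) := by rw [Matrix.mul_adjugate]
    _ = η3 * vᵀ * η3 := by rw [hdet, one_smul, mul_one]
  rw [Matrix.adjugate_fin_three] at hadj
  have hc : ∀ i j, (!![v 1 1 * v 2 2 - v 1 2 * v 2 1,
      -(v 0 1 * v 2 2) + v 0 2 * v 2 1,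
      v 0 1 * v 1 2 - v 0 2 * v 1 1;
      -(v 1 0 * v 2 2) + v 1 2 * v 2 0,
      v 0 0 * v 2 2 - v 0 2 * v 2 0,
      -(v 0 0 * v 1 2) + v 0 2 * v 1 0;
      v 1 0 * v 2 1 - v 1 1 * v 2 0,
      -(v 0 0 * v 2 1) + v 0 1 * v 2 0,
      v 0 0 * v 1 1 - v 0 1 * v 1 0] : Matrix (Fin 3) (Fin 3) ℝ) i j
      = (η3 * vᵀ * η3) i j := fun i j => by rw [hadj]
  have c01 := hc 0 1; have c02 := hc 0 2
  have c10 := hc 1 0; have c12 := hc 1 2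
  have c20 := hc 2 0; have c21 := hc 2 1
  have c00 := hc 0 0; have c11 := hc 1 1; have c22 := hc 2 2
  simp [η3, Matrix.mul_apply, Fin.sum_univ_three, Matrix.diagonal] at c00 c01 c02 c10 c11 c12 c20 c21 c22
  ext i j
  fin_cases i <;> fin_cases j <;>
    simp [Mmap, η3, Matrix.mul_apply, Matrix.mulVec, dotProduct,
      Fin.sum_univ_three, e3, Pi.single, Matrix.diagonal] <;>
    linarith [c00, c01, c02, c10, c11, c12, c20, c21, c22]

/-- equations (3.17)–(3.19): the coadjoint-orbit element
T = h(μJ₀ + sP₀)h⁻¹ of a particle of mass μ and spin s has momentum p⃗ = μ Ad(v)J₀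
and angular momentum k⃗ = x⃗ ∧ p⃗ + s p̂, satisfying the mass and spin constraints. -/
theorem statement10 (v : Matrix (Fin 3) (Fin 3) ℝ) (hv : IsSOplus v)
    (x : Fin 3 → ℝ) (μ s : ℝ)
    (h : Matrix (Fin 4) (Fin 4) ℝ) (hh : h = pmat v x)
    (p k : Fin 3 → ℝ) (hp : p = μ • (v *ᵥ e3 0))
    (hk : k = crossM x p + s • (v *ᵥ e3 0)) :
    h * (μ • Jhat 0 + s • Phat 0) * h⁻¹ = amat (Mmap p) k
    ∧ mink p p = μ ^ 2 ∧ mink p k = μ * s := by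
  obtain ⟨hη, hdet, _⟩ := hv
  have hwv : (η3 * vᵀ * η3) * v = 1 := by
    calc (η3 * vᵀ * η3) * v = η3 * (vᵀ * η3 * v) := by simp only [Matrix.mul_assoc]
    _ = η3 * η3 := by rw [hη]
    _ = 1 := eta_sq
  have hvw : v * (η3 * vᵀ * η3) = 1 := mul_eq_one_comm.mp hwv
  have hinv : h⁻¹ = pmat (η3 * vᵀ * η3) (-((η3 * vᵀ * η3) *ᵥ x)) := by
    apply Matrix.inv_eq_right_inv
    rw [hh, pmat_mul, hvw]
    have hx : v *ᵥ (-((η3 * vᵀ * η3) *ᵥ x)) + x = 0 := by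
      rw [Matrix.mulVec_neg, Matrix.mulVec_mulVec, hvw, Matrix.one_mulVec]
      simp
    rw [hx, pmat_one]
  have hXw : v * (μ • Mmap (e3 0)) * (η3 * vᵀ * η3) = Mmap p := by
    rw [Matrix.mul_smul, Matrix.smul_mul, key_conj v hη hdet, hp, Mmap_smul]
  have h00 : v 0 0 * v 0 0 - v 1 0 * v 1 0 - v 2 0 * v 2 0 = 1 := by
    have h' := congrFun (congrFun hη 0) 0
    simp [η3, Matrix.mul_apply, Fin.sum_univ_three, Matrix.diagonal] at h'
    linarith
  refine ⟨?_, ?_, ?_⟩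
  · rw [hinv, hh, smul_Jhat_add_smul_Phat, pmat_mul_amat, amat_mul_pmat,
      Matrix.mulVec_neg, Matrix.mulVec_mulVec, hXw, Mmap_mulVec,
      crossM_anti p x, neg_neg, Matrix.mulVec_smul, ← hk]
  · rw [hp]
    simp [mink, Matrix.mulVec, dotProduct, Fin.sum_univ_three, e3, Pi.single_apply]
    linear_combination (μ^2) * h00
  · rw [hk, hp]
    simp [mink, crossM, Matrix.mulVec, dotProduct, Fin.sum_univ_three, e3,
      Pi.single_apply]
    linear_combination (μ*s) * h00
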